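/- For n positive reals a₁,…,aₙ and positive weights w₁,…,wₙ summing to 1, the difference between the weighted arithmetic and harmonic means satisfies the identity M_w − H_w = [Σ_{i<j} wᵢwⱼ(aᵢ−aⱼ)² Π_{k≠i,j} a_k] / [Σⱼ wⱼ Π_{k≠j} a_k], where M_w = Σᵢ wᵢaᵢ and H_w = (Πₖ aₖ)/(Σⱼ wⱼ Π_{k≠j} a_k). -/

import Mathlib

open Finset

theorem weighted_AM_sub_HM_n (n : ℕ) (hn : 2 ≤ n)
    (a w : Fin n → ℝ) (ha : ∀ i, 0 < a i) (hw : ∀ i, 0 < w i)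
    (hsum : ∑ i, w i = 1) :
    (∑ i, w i * a i)
      - (∏ k, a k) / (∑ j, w j * ∏ k ∈ Finset.univ \ {j}, a k)
      = (∑ p ∈ Finset.univ.filter (fun p : Fin n × Fin n => p.1 < p.2),
          w p.1 * w p.2 * (a p.1 - a p.2) ^ 2
            * ∏ k ∈ Finset.univ \ {p.1, p.2}, a k)
        / (∑ j, w j * ∏ k ∈ Finset.univ \ {j}, a k) := by
  have hn0 : 0 < n := by omega
  set D := ∑ j, w j * ∏ k ∈ Finset.univ \ {j}, a k with hDdef
  have hDpos : 0 < D := by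
    apply Finset.sum_pos (fun j _ => mul_pos (hw j) (Finset.prod_pos fun k _ => ha k))
    exact ⟨⟨0, hn0⟩, Finset.mem_univ _⟩
  rw [sub_div' hDpos.ne', div_eq_div_iff hDpos.ne' hDpos.ne']
  -- reduce to polynomial identity after multiplying by D
  have hfull : ∀ i : Fin n, a i * ∏ k ∈ univ \ {i}, a k = ∏ k, a k := by
    intro i
    rw [show (univ \ {i} : Finset (Fin n)) = univ.erase i by
          ext k; simp [and_comm],
        Finset.mul_prod_erase _ _ (mem_univ i)]
  have hpair : ∀ i j : Fin n, i ≠ j →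
      (∏ k ∈ univ \ {j}, a k) = a i * ∏ k ∈ univ \ ({i, j} : Finset (Fin n)), a k := by
    intro i j hij
    have hmem : i ∈ univ \ ({j} : Finset (Fin n)) := by simp [hij]
    rw [← Finset.mul_prod_erase _ _ hmem]
    have he : (univ \ ({j} : Finset (Fin n))).erase i = univ \ ({i, j} : Finset (Fin n)) := by
      ext k; simp [Finset.mem_erase]
    rw [he]
  set f : Fin n × Fin n → ℝ := fun p =>
    w p.1 * w p.2 * (a p.1 * ∏ k ∈ univ \ {p.2}, a k - ∏ k, a k) with hfdef
  set g : Fin n × Fin n → ℝ := fun p =>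
    w p.1 * w p.2 * (a p.1 - a p.2) ^ 2 * ∏ k ∈ univ \ {p.1, p.2}, a k with hgdef
  have hkey : ∀ p : Fin n × Fin n, f p + f p.swap = g p := by
    rintro ⟨i, j⟩
    rcases eq_or_ne i j with h | h
    · subst h
      simp [hfdef, hgdef, hfull i]
    · have h1 := hpair i j h
      have h2 : (∏ k ∈ univ \ {i}, a k) = a j * ∏ k ∈ univ \ ({i, j} : Finset (Fin n)), a k := by
        rw [hpair j i h.symm, Finset.pair_comm]
      have h3 : (∏ k, a k) = a i * (a j * ∏ k ∈ univ \ ({i, j} : Finset (Fin n)), a k) := by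
        rw [← h2, hfull i]
      simp only [hfdef, hgdef, Prod.swap_prod_mk, h1, h2, h3]
      ring
  have hgsymm : ∀ p : Fin n × Fin n, g p.swap = g p := by
    rintro ⟨i, j⟩
    simp only [hgdef, Prod.swap_prod_mk]
    rw [Finset.pair_comm]
    ring
  have hsumf : ∑ p : Fin n × Fin n, f p = (∑ i, w i * a i) * D - ∏ k, a k := by
    have e1 : ∑ p : Fin n × Fin n, f p
        = ∑ i, ∑ j, ((w i * a i) * (w j * ∏ k ∈ univ \ {j}, a k) - w i * w j * ∏ k, a k) := by
      rw [← Finset.univ_product_univ, Finset.sum_product]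
      exact Finset.sum_congr rfl fun i _ => Finset.sum_congr rfl fun j _ => by
        simp only [hfdef]; ring
    rw [e1]
    have e2 : ∀ i : Fin n,
        ∑ j, (w i * a i * (w j * ∏ k ∈ univ \ {j}, a k) - w i * w j * ∏ k, a k)
          = (w i * a i) * D - w i * ∏ k, a k := by
      intro i
      rw [Finset.sum_sub_distrib, ← Finset.mul_sum, ← hDdef]
      congr 1
      calc ∑ j, w i * w j * ∏ k, a k = ∑ j, (w i * ∏ k, a k) * w j :=
            Finset.sum_congr rfl fun j _ => by ring
        _ = (w i * ∏ k, a k) * ∑ j, w j := by rw [Finset.mul_sum]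
        _ = w i * ∏ k, a k := by rw [hsum, mul_one]
    rw [Finset.sum_congr rfl fun i _ => e2 i, Finset.sum_sub_distrib, ← Finset.sum_mul,
        ← Finset.sum_mul, hsum, one_mul]
  have hswap : ∑ p : Fin n × Fin n, f p.swap = ∑ p : Fin n × Fin n, f p := by
    exact Finset.sum_equiv (Equiv.prodComm (Fin n) (Fin n)) (by simp) (by simp)
  have hsumg : ∑ p : Fin n × Fin n, g p = 2 * ((∑ i, w i * a i) * D - ∏ k, a k) := by
    calc ∑ p : Fin n × Fin n, g p = ∑ p : Fin n × Fin n, (f p + f p.swap) :=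
          Finset.sum_congr rfl fun p _ => (hkey p).symm
      _ = (∑ p : Fin n × Fin n, f p) + ∑ p : Fin n × Fin n, f p.swap :=
          Finset.sum_add_distrib
      _ = 2 * ((∑ i, w i * a i) * D - ∏ k, a k) := by rw [hswap, hsumf]; ring
  -- split the full sum into lt, gt, eq parts
  have hgtlt : ∑ p ∈ Finset.univ.filter (fun p : Fin n × Fin n => p.2 < p.1), g p
      = ∑ p ∈ Finset.univ.filter (fun p : Fin n × Fin n => p.1 < p.2), g p := by
    refine Finset.sum_equiv (Equiv.prodComm (Fin n) (Fin n)) (fun p => by simp) ?_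
    intro p _
    exact (hgsymm p).symm
  have hsplit : ∑ p : Fin n × Fin n, g p
      = 2 * ∑ p ∈ Finset.univ.filter (fun p : Fin n × Fin n => p.1 < p.2), g p := by
    rw [← Finset.sum_filter_add_sum_filter_not univ (fun p : Fin n × Fin n => p.1 < p.2),
        ← Finset.sum_filter_add_sum_filter_not
          (univ.filter (fun p : Fin n × Fin n => ¬ p.1 < p.2)) (fun p => p.2 < p.1),
        Finset.filter_filter, Finset.filter_filter]
    have e1 : (univ.filter fun p : Fin n × Fin n => ¬p.1 < p.2 ∧ p.2 < p.1)
        = univ.filter (fun p : Fin n × Fin n => p.2 < p.1) := by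
      refine Finset.filter_congr fun p _ => ?_
      simp only [iff_iff_implies_and_implies]
      exact ⟨fun h => h.2, fun h => ⟨not_lt_of_gt h, h⟩⟩
    have e2 : ∑ p ∈ (univ.filter fun p : Fin n × Fin n => ¬p.1 < p.2 ∧ ¬p.2 < p.1), g p = 0 := by
      refine Finset.sum_eq_zero fun p hp => ?_
      simp only [Finset.mem_filter] at hp
      have : p.1 = p.2 := le_antisymm (le_of_not_gt hp.2.2) (le_of_not_gt hp.2.1)
      simp [hgdef, this]
    rw [e1, e2, hgtlt]
    ring
  have key : (∑ i, w i * a i) * D - ∏ k, a k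
      = ∑ p ∈ Finset.univ.filter (fun p : Fin n × Fin n => p.1 < p.2), g p := by
    linarith [hsumg, hsplit]
  rw [key]
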